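/- Let n ≥ 3 and let χ be a map from the additive group of symmetric n×n integer matrices to the multiplicative group ℂ* of nonzero complex numbers satisfying χ(B₁ + B₂) = χ(B₁)·χ(B₂) for all symmetric integer matrices B₁, B₂, and χ(A·B·Aᵀ) = χ(B) for every A ∈ SL(n,ℤ) and every symmetric integer matrix B. Then χ(B) = 1 for all symmetric integer matrices B. -/

import Mathlib

open Matrix

section Aux

variable {n : ℕ}

lemma stmt15_transpose_std (i j : Fin n) (a : ℤ) :
    (single i j a)ᵀ = single j i a := by
  ext x y
  simp [single, and_comm]

lemma stmt15_expand (P Q X : Matrix (Fin n) (Fin n) ℤ) :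
    (1 + P) * X * (1 + Q) = X + P * X + X * Q + P * X * Q := by
  noncomm_ring

lemma stmt15_conj_S (i j k : Fin n) (hij : i ≠ j) (hjk : j ≠ k) (hik : i ≠ k) :
    (1 + single i j (1:ℤ)) * (single j k 1 + single k j 1) *
      (1 + single i j (1:ℤ))ᵀ =
    (single j k 1 + single k j 1) +
      (single i k 1 + single k i 1) := by
  rw [transpose_add, transpose_one, stmt15_transpose_std, stmt15_expand]
  simp only [mul_add, add_mul, single_mul_single_same,
    single_mul_single_of_ne (c := (1:ℤ)) i j _ hjk (1:ℤ),
    single_mul_single_of_ne (c := (1:ℤ)) j k _ hjk.symm (1:ℤ),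
    single_mul_single_of_ne (c := (1:ℤ)) i k _ hjk.symm (1:ℤ),
    mul_one, one_mul, zero_mul, mul_zero, add_zero, zero_add]
  abel

lemma stmt15_conj_D (i j : Fin n) :
    (1 + single i j (1:ℤ)) * single j j 1 *
      (1 + single i j (1:ℤ))ᵀ =
    single j j 1 + (single i j 1 + single j i 1)
      + single i i 1 := by
  rw [transpose_add, transpose_one, stmt15_transpose_std, stmt15_expand]
  simp only [single_mul_single_same, mul_one, one_mul]
  abel

end Aux

theorem stmt15 (n : ℕ) (hn : 3 ≤ n) (χ : Matrix (Fin n) (Fin n) ℤ → ℂˣ)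
    (hadd : ∀ B₁ B₂ : Matrix (Fin n) (Fin n) ℤ,
      B₁ᵀ = B₁ → B₂ᵀ = B₂ → χ (B₁ + B₂) = χ B₁ * χ B₂)
    (hSL : ∀ A : Matrix (Fin n) (Fin n) ℤ, A.det = 1 →
      ∀ B : Matrix (Fin n) (Fin n) ℤ, Bᵀ = B → χ (A * B * Aᵀ) = χ B) :
    ∀ B : Matrix (Fin n) (Fin n) ℤ, Bᵀ = B → χ B = 1 := by
  set E : Fin n → Fin n → Matrix (Fin n) (Fin n) ℤ := fun i j => single i j 1 with hE
  have hEsymm : ∀ i j : Fin n, (E i j + E j i)ᵀ = E i j + E j i := by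
    intro i j
    rw [transpose_add, stmt15_transpose_std, stmt15_transpose_std, add_comm]
  have hDsymm : ∀ i : Fin n, (E i i)ᵀ = E i i := fun i => stmt15_transpose_std i i 1
  have hzero : χ 0 = 1 := by
    have h := hadd 0 0 (by simp) (by simp)
    simp only [add_zero] at h
    have h2 : χ 0 * 1 = χ 0 * χ 0 := by rw [mul_one]; exact h
    exact (mul_left_cancel h2).symm
  have hneg : ∀ B : Matrix (Fin n) (Fin n) ℤ, Bᵀ = B → χ (-B) = (χ B)⁻¹ := by
    intro B hB
    have h := hadd B (-B) hB (by rw [transpose_neg, hB])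
    rw [add_neg_cancel, hzero] at h
    have h3 : χ (-B) * χ B = 1 := by rw [mul_comm]; exact h.symm
    exact eq_inv_of_mul_eq_one_left (mul_comm (χ (-B)) (χ B) ▸ h3)
  have hex : ∀ i k : Fin n, ∃ j : Fin n, j ≠ i ∧ j ≠ k := by
    intro i k
    by_contra h
    push_neg at h
    have hsub : (Finset.univ : Finset (Fin n)) ⊆ {i, k} := by
      intro x _
      by_cases hx : x = i
      · simp [hx]
      · simp [h x hx]
    have h1 := Finset.card_le_card hsub
    simp only [Finset.card_univ, Fintype.card_fin] at h1
    have h2 : n ≤ 2 := le_trans h1 (le_trans (Finset.card_insert_le _ _) (by simp))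
    omega
  have hSval : ∀ i k : Fin n, i ≠ k → χ (E i k + E k i) = 1 := by
    intro i k hik
    obtain ⟨j, hji, hjk⟩ := hex i k
    have hdet : (1 + single i j (1:ℤ)).det = 1 := by
      have h := Matrix.det_transvection_of_ne i j hji.symm (1:ℤ)
      rwa [Matrix.transvection] at h
    have hconj := hSL _ hdet (E j k + E k j) (hEsymm j k)
    rw [show (1 + single i j (1:ℤ)) * (E j k + E k j) *
          (1 + single i j (1:ℤ))ᵀ =
        (E j k + E k j) + (E i k + E k i) from
      stmt15_conj_S i j k hji.symm hjk hik] at hconj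
    rw [hadd _ _ (hEsymm j k) (hEsymm i k)] at hconj
    have h2 : χ (E j k + E k j) * χ (E i k + E k i) = χ (E j k + E k j) * 1 := by
      rw [mul_one]; exact hconj
    exact mul_left_cancel h2
  have hDval : ∀ i : Fin n, χ (E i i) = 1 := by
    intro i
    obtain ⟨j, hji, -⟩ := hex i i
    have hdet : (1 + single i j (1:ℤ)).det = 1 := by
      have h := Matrix.det_transvection_of_ne i j hji.symm (1:ℤ)
      rwa [Matrix.transvection] at h
    have hconj := hSL _ hdet (E j j) (hDsymm j)
    rw [show (1 + single i j (1:ℤ)) * (E j j) *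
          (1 + single i j (1:ℤ))ᵀ =
        E j j + (E i j + E j i) + E i i from stmt15_conj_D i j] at hconj
    rw [add_assoc] at hconj
    rw [hadd _ _ (hDsymm j) (by rw [transpose_add, hEsymm, hDsymm]),
        hadd _ _ (hEsymm i j) (hDsymm i), hSval i j hji.symm, one_mul] at hconj
    have h2 : χ (E j j) * χ (E i i) = χ (E j j) * 1 := by rw [mul_one]; exact hconj
    exact mul_left_cancel h2
  have hsmul : ∀ M : Matrix (Fin n) (Fin n) ℤ, Mᵀ = M → χ M = 1 →
      ∀ k : ℤ, χ (k • M) = 1 := by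
    intro M hM hMval k
    have hMneg : χ (-M) = 1 := by rw [hneg M hM, hMval, inv_one]
    induction k using Int.induction_on with
    | zero => simpa using hzero
    | succ m ih =>
        have h : ((m : ℤ) + 1) • M = (m : ℤ) • M + M := by rw [add_smul, one_smul]
        rw [h, hadd _ _ (by rw [transpose_smul, hM]) hM, ih, hMval, mul_one]
    | pred m ih =>
        have h : (-(m : ℤ) - 1) • M = (-(m : ℤ)) • M + (-M) := by
          rw [sub_smul, one_smul, sub_eq_add_neg]
        rw [h, hadd _ _ (by rw [transpose_smul, hM]) (by rw [transpose_neg, hM]),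
          ih, hMneg, mul_one]
  have hsum : ∀ (s : Finset (Fin n × Fin n)) (f : Fin n × Fin n → Matrix (Fin n) (Fin n) ℤ),
      (∀ p ∈ s, (f p)ᵀ = f p) → (∀ p ∈ s, χ (f p) = 1) → χ (∑ p ∈ s, f p) = 1 := by
    intro s
    induction s using Finset.induction_on with
    | empty => intro f _ _; simpa using hzero
    | insert _ _ ha ih =>
        rename_i a s'
        intro f hsymm hval
        rw [Finset.sum_insert ha,
          hadd _ _ (hsymm a (Finset.mem_insert_self a s'))
            (by rw [transpose_sum]
                exact Finset.sum_congr rfl fun p hp =>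
                  hsymm p (Finset.mem_insert_of_mem hp)),
          hval a (Finset.mem_insert_self a s'),
          ih f (fun p hp => hsymm p (Finset.mem_insert_of_mem hp))
            (fun p hp => hval p (Finset.mem_insert_of_mem hp)), mul_one]
  intro B hB
  set f : Fin n × Fin n → Matrix (Fin n) (Fin n) ℤ := fun p =>
    if p.1 = p.2 then B p.1 p.1 • E p.1 p.1
    else if p.1 < p.2 then B p.1 p.2 • (E p.1 p.2 + E p.2 p.1)
    else 0 with hf
  have hrepr : B = ∑ p : Fin n × Fin n, f p := by
    ext a b
    rw [Matrix.sum_apply]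
    rcases lt_trichotomy a b with hab | hab | hab
    · have hne : a ≠ b := ne_of_lt hab
      rw [Finset.sum_eq_single (a, b)]
      · simp only [hf, hE, if_neg hne, if_pos hab, Matrix.smul_apply, Matrix.add_apply,
          single_apply_same]
        rw [single_apply_of_ne b a 1 a b (fun h => hne h.1.symm)]
        simp
      · rintro ⟨i, j⟩ - hp
        simp only [hf, hE]
        split_ifs with h1 h2
        · rw [Matrix.smul_apply,
            single_apply_of_ne i i _ a b (fun h => hne (h.1.symm.trans h.2)),
            smul_zero]
        · rw [Matrix.smul_apply, Matrix.add_apply,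
            single_apply_of_ne i j _ a b (fun h => hp (by rw [h.1, h.2])),
            single_apply_of_ne j i _ a b
              (fun h => by obtain ⟨rfl, rfl⟩ := h; exact absurd hab (asymm h2)),
            add_zero, smul_zero]
        · simp
      · intro h; exact absurd (Finset.mem_univ _) h
    · subst hab
      rw [Finset.sum_eq_single (a, a)]
      · simp only [hf, hE, if_pos rfl, Matrix.smul_apply, single_apply_same,
          smul_eq_mul, mul_one]
      · rintro ⟨i, j⟩ - hp
        simp only [hf, hE]
        split_ifs with h1 h2
        · rw [Matrix.smul_apply,
            single_apply_of_ne i i _ a a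
              (fun h => by obtain ⟨rfl, -⟩ := h; exact hp (by rw [← h1])),
            smul_zero]
        · rw [Matrix.smul_apply, Matrix.add_apply,
            single_apply_of_ne i j _ a a (fun h => h1 (h.1.trans h.2.symm)),
            single_apply_of_ne j i _ a a (fun h => h1 (h.2.trans h.1.symm)),
            add_zero, smul_zero]
        · simp
      · intro h; exact absurd (Finset.mem_univ _) h
    · have hne : b ≠ a := ne_of_lt hab
      rw [Finset.sum_eq_single (b, a)]
      · simp only [hf, hE, if_neg hne, if_pos hab, Matrix.smul_apply, Matrix.add_apply]
        rw [single_apply_of_ne b a 1 a b (fun h => hne h.1),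
          single_apply_same, zero_add, smul_eq_mul, mul_one]
        have hBab : B b a = B a b := by
          have h := congrFun (congrFun hB a) b
          rw [Matrix.transpose_apply] at h
          exact h
        rw [hBab]
      · rintro ⟨i, j⟩ - hp
        simp only [hf, hE]
        split_ifs with h1 h2
        · rw [Matrix.smul_apply,
            single_apply_of_ne i i _ a b (fun h => hne (h.2.symm.trans h.1)),
            smul_zero]
        · rw [Matrix.smul_apply, Matrix.add_apply,
            single_apply_of_ne i j _ a b
              (fun h => by obtain ⟨rfl, rfl⟩ := h; exact absurd hab (asymm h2)),
            single_apply_of_ne j i _ a b (fun h => hp (by rw [h.2, h.1])),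
            add_zero, smul_zero]
        · simp
      · intro h; exact absurd (Finset.mem_univ _) h
  rw [hrepr]
  apply hsum
  · intro p _
    simp only [hf]
    split_ifs
    · rw [transpose_smul, hDsymm]
    · rw [transpose_smul, hEsymm]
    · simp
  · intro p _
    simp only [hf]
    split_ifs with h1 h2
    · exact hsmul _ (hDsymm _) (hDval _) _
    · exact hsmul _ (hEsymm _ _) (hSval _ _ (ne_of_lt h2)) _
    · simpa using hzero
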